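/- Let A ∈ B(E,F) have generalized inverse A⁺ and let T ∈ B(E,F) with ‖T − A‖ < ‖A⁺‖⁻¹. Then R(T) ∩ N(A⁺) = {0} if and only if (I_E − A⁺A) N(T) = N(A). -/

import Mathlib

theorem stmt_5 {E F : Type*} [NormedAddCommGroup E] [NormedSpace ℝ E] [CompleteSpace E]
    [NormedAddCommGroup F] [NormedSpace ℝ F] [CompleteSpace F]
    (A T : E →L[ℝ] F) (Ap : F →L[ℝ] E)
    (h1 : A ∘L Ap ∘L A = A) (h2 : Ap ∘L A ∘L Ap = Ap)
    (hT : ‖T - A‖ < ‖Ap‖⁻¹) :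
    LinearMap.range (T : E →ₗ[ℝ] F) ⊓ LinearMap.ker (Ap : F →ₗ[ℝ] E) = ⊥ ↔
      Submodule.map (((1 : E →L[ℝ] E) - Ap ∘L A : E →L[ℝ] E) : E →ₗ[ℝ] E) (LinearMap.ker (T : E →ₗ[ℝ] F)) = LinearMap.ker (A : E →ₗ[ℝ] F) := by
  have h1' : ∀ x, A (Ap (A x)) = A x := by
    intro x
    have := ContinuousLinearMap.ext_iff.mp h1 x
    simpa using this
  have h2' : ∀ y, Ap (A (Ap y)) = Ap y := by
    intro y
    have := ContinuousLinearMap.ext_iff.mp h2 y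
    simpa using this
  have hApne : Ap ≠ 0 := by
    rintro rfl
    simp at hT
    exact (norm_nonneg _).not_gt hT
  have hAppos : (0:ℝ) < ‖Ap‖ := norm_pos_iff.mpr hApne
  have hD : ‖Ap ∘L (T - A)‖ < 1 := by
    calc ‖Ap ∘L (T - A)‖ ≤ ‖Ap‖ * ‖T - A‖ := ContinuousLinearMap.opNorm_comp_le _ _
      _ < ‖Ap‖ * ‖Ap‖⁻¹ := by exact mul_lt_mul_of_pos_left hT hAppos
      _ = 1 := mul_inv_cancel₀ (ne_of_gt hAppos)
  have hD' : ‖-(Ap ∘L (T - A))‖ < 1 := by rwa [norm_neg]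
  set B : (E →L[ℝ] E)ˣ := Units.oneSub _ hD' with hB
  have hBval : (B : E →L[ℝ] E) = 1 + Ap ∘L (T - A) := by
    simp only [hB, Units.oneSub]
    rw [sub_neg_eq_add]
  have hBapp : ∀ x, (B : E →L[ℝ] E) x = x + Ap (T x) - Ap (A x) := by
    intro x
    rw [hBval]
    simp only [ContinuousLinearMap.add_apply, ContinuousLinearMap.one_apply,
      ContinuousLinearMap.comp_apply, ContinuousLinearMap.sub_apply, map_sub]
    abel
  have hinj : ∀ a b : E, (B : E →L[ℝ] E) a = (B : E →L[ℝ] E) b → a = b := by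
    intro a b h
    have h' : ((↑B⁻¹ * ↑B : E →L[ℝ] E)) a = ((↑B⁻¹ * ↑B : E →L[ℝ] E)) b := by
      simp only [ContinuousLinearMap.mul_apply, h]
    rwa [B.inv_mul] at h'
  have hsurj : ∀ v : E, (B : E →L[ℝ] E) ((↑B⁻¹ : E →L[ℝ] E) v) = v := by
    intro v
    have h' := congrArg (fun f : E →L[ℝ] E => f v) B.mul_inv
    simp only [ContinuousLinearMap.mul_apply, ContinuousLinearMap.one_apply] at h'
    exact h'
  constructor
  · intro hL
    apply le_antisymm
    · rintro y hy
      rw [Submodule.mem_map] at hy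
      obtain ⟨x, hx, rfl⟩ := hy
      simp only [LinearMap.mem_ker, ContinuousLinearMap.coe_coe,
        ContinuousLinearMap.sub_apply, ContinuousLinearMap.one_apply,
        ContinuousLinearMap.comp_apply, map_sub, h1', sub_self]
    · intro v hv
      have hv' : A v = 0 := hv
      set x : E := (↑B⁻¹ : E →L[ℝ] E) v with hx
      have hBx : (B : E →L[ℝ] E) x = v := hsurj v
      have e1 : Ap (T x) = v - x + Ap (A x) := by
        rw [← hBx, hBapp]; abel
      have hApTx : Ap (T x) = 0 := by
        calc Ap (T x) = Ap (A (Ap (T x))) := (h2' _).symm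
          _ = Ap (A (v - x + Ap (A x))) := by rw [e1]
          _ = Ap (A v) - Ap (A x) + Ap (A (Ap (A x))) := by
              simp only [map_sub, map_add]
          _ = 0 := by rw [hv', h1']; simp
      have hTx : T x = 0 := by
        have hmem : T x ∈ LinearMap.range (T : E →ₗ[ℝ] F) ⊓ LinearMap.ker (Ap : F →ₗ[ℝ] E) :=
          ⟨⟨x, rfl⟩, hApTx⟩
        rw [hL] at hmem
        simpa using hmem
      refine Submodule.mem_map.mpr ⟨x, ?_, ?_⟩
      · simpa [LinearMap.mem_ker] using hTx
      · have e2 := hBapp x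
        rw [hBx, hTx] at e2
        simp only [map_zero, add_zero] at e2
        simp only [ContinuousLinearMap.coe_coe, ContinuousLinearMap.sub_apply,
          ContinuousLinearMap.one_apply, ContinuousLinearMap.comp_apply]
        rw [← e2]
  · intro hR
    rw [eq_bot_iff]
    rintro y ⟨hr, hk⟩
    obtain ⟨x, rfl⟩ := hr
    have hk' : Ap (T x) = 0 := hk
    have hmem : ((1 : E →L[ℝ] E) - Ap ∘L A) x ∈ LinearMap.ker (A : E →ₗ[ℝ] F) := by
      simp only [LinearMap.mem_ker, ContinuousLinearMap.coe_coe,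
        ContinuousLinearMap.sub_apply, ContinuousLinearMap.one_apply,
        ContinuousLinearMap.comp_apply, map_sub, h1', sub_self]
    rw [← hR] at hmem
    obtain ⟨z, hz, hzx⟩ := Submodule.mem_map.mp hmem
    have hzT : T z = 0 := hz
    have hzx' : z - Ap (A z) = x - Ap (A x) := by
      simpa [ContinuousLinearMap.sub_apply, ContinuousLinearMap.one_apply,
        ContinuousLinearMap.comp_apply] using hzx
    have hBz : (B : E →L[ℝ] E) z = z - Ap (A z) := by
      rw [hBapp, hzT]; simp
    have hBx : (B : E →L[ℝ] E) x = x - Ap (A x) := by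
      rw [hBapp]
      rw [hk']
      simp
    have hzx2 : z = x := hinj _ _ (by rw [hBz, hBx, hzx'])
    have : T x = 0 := by rw [← hzx2, hzT]
    simpa using this
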